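/- Every pointed category C admitting binary products and coequalizers, in which binary products commute with coequalizers, is centralic. -/

import Mathlib

open CategoryTheory CategoryTheory.Limits

universe v u

/-- A pointed category with binary products is *centralic*. -/
def Centralic (C : Type u) [Category.{v} C] [HasZeroObject C] [HasZeroMorphisms C]
    [HasBinaryProducts C] : Prop :=
  ∀ ⦃X Y Z S : C⦄ (f : X ⨯ Y ⟶ Z) (x x' : S ⟶ X) (y : S ⟶ Y),
    prod.lift x 0 ≫ f = prod.lift x' 0 ≫ f →
    prod.lift x y ≫ f = prod.lift x' y ≫ f

/-- `q : X ⟶ Q` is a coequalizer of `u v : A ⟶ X`. -/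
def IsCoequalizerDiagram {C : Type u} [Category.{v} C] {A X Q : C}
    (u v : A ⟶ X) (q : X ⟶ Q) : Prop :=
  u ≫ q = v ≫ q ∧ ∀ ⦃Z : C⦄ (h : X ⟶ Z), u ≫ h = v ≫ h → ∃! t : Q ⟶ Z, q ≫ t = h

/-- Binary products commute with coequalizers. -/
def ProdCommutesWithCoeq (C : Type u) [Category.{v} C] [HasBinaryProducts C] : Prop :=
  ∀ ⦃C₁ X₁ Q₁ C₂ X₂ Q₂ : C⦄ (u₁ v₁ : C₁ ⟶ X₁) (q₁ : X₁ ⟶ Q₁)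
    (u₂ v₂ : C₂ ⟶ X₂) (q₂ : X₂ ⟶ Q₂),
    IsCoequalizerDiagram u₁ v₁ q₁ → IsCoequalizerDiagram u₂ v₂ q₂ →
    IsCoequalizerDiagram (prod.map u₁ u₂) (prod.map v₁ v₂) (prod.map q₁ q₂)

theorem stmt2 (C : Type u) [Category.{v} C] [HasZeroObject C] [HasZeroMorphisms C]
    [HasBinaryProducts C] [HasCoequalizers C]
    (h : ProdCommutesWithCoeq C) : Centralic C := by
  intro X Y Z S f x x' y hf
  set q : X ⟶ coequalizer x x' := coequalizer.π x x' with hq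
  have h1 : IsCoequalizerDiagram x x' q := by
    refine ⟨coequalizer.condition x x', fun Z g hg => ?_⟩
    exact ⟨coequalizer.desc g hg, coequalizer.π_desc g hg,
      fun t ht => coequalizer.hom_ext (by simpa using ht)⟩
  have h2 : IsCoequalizerDiagram (0 : Y ⟶ Y) 0 (𝟙 Y) := by
    refine ⟨rfl, fun Z g _ => ⟨g, Category.id_comp g, fun t ht => by simpa using ht⟩⟩
  have h3 := h x x' q (0 : Y ⟶ Y) 0 (𝟙 Y) h1 h2
  have hcoeq : prod.map x (0 : Y ⟶ Y) ≫ f = prod.map x' (0 : Y ⟶ Y) ≫ f := by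
    have e1 : prod.map x (0 : Y ⟶ Y) = prod.fst ≫ prod.lift x 0 := by
      ext <;> simp only [prod.map_fst, prod.map_snd, Category.assoc, prod.lift_fst, prod.lift_snd, comp_zero]
    have e2 : prod.map x' (0 : Y ⟶ Y) = prod.fst ≫ prod.lift x' 0 := by
      ext <;> simp only [prod.map_fst, prod.map_snd, Category.assoc, prod.lift_fst, prod.lift_snd, comp_zero]
    rw [e1, e2, Category.assoc, Category.assoc, hf]
  obtain ⟨t, ht, -⟩ := h3.2 f hcoeq
  have hx : x ≫ q = x' ≫ q := h1.1
  calc prod.lift x y ≫ f = prod.lift x y ≫ prod.map q (𝟙 Y) ≫ t := by rw [ht]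
    _ = prod.lift (x ≫ q) y ≫ t := by rw [← Category.assoc]; simp
    _ = prod.lift (x' ≫ q) y ≫ t := by rw [hx]
    _ = prod.lift x' y ≫ prod.map q (𝟙 Y) ≫ t := by rw [← Category.assoc]; simp
    _ = prod.lift x' y ≫ f := by rw [ht]
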